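/- A formula φ of the basic epistemic language is valid on the class of all belief-correct multi-agent belief models if and only if (B, U_BC) ⊨ φ for every correct MBB B, where U_BC is the class of all correct MBBs (the universal context with belief correctness). -/

import Mathlib

set_option linter.unusedSectionVars false
set_option maxHeartbeats 1000000

/-- Explicit-belief language L₀ over atoms ℕ and agents `Fin n`. -/
inductive Form0 (n : ℕ) : Type
  | atom : ℕ → Form0 n
  | neg : Form0 n → Form0 n
  | conj : Form0 n → Form0 n → Form0 n
  | tri : Fin n → Form0 n → Form0 n

/-- Multi-agent belief base. -/
structure MBB (n : ℕ) where
  base : Fin n → Set (Form0 n)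
  state : Set ℕ

/-- Satisfaction of L₀-formulas at an MBB. -/
def sat0 {n : ℕ} (B : MBB n) : Form0 n → Prop
  | .atom p => p ∈ B.state
  | .neg a => ¬ sat0 B a
  | .conj a b => sat0 B a ∧ sat0 B b
  | .tri i a => a ∈ B.base i

/-- A correct MBB: every explicit belief is true at it. -/
def MBB.Correct {n : ℕ} (B : MBB n) : Prop := ∀ i : Fin n, ∀ a ∈ B.base i, sat0 B a

/-- Epistemic alternative relation: B Rᵢ B' iff B' satisfies everything in agent i's base at B. -/
def EpiAlt {n : ℕ} (i : Fin n) (B B' : MBB n) : Prop := ∀ a ∈ B.base i, sat0 B' a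

/-- Belief correctness of an MBM (B, C). -/
def BC {n : ℕ} (B : MBB n) (C : Set (MBB n)) : Prop :=
  B ∈ C ∧ ∀ B' ∈ C, ∀ i : Fin n, EpiAlt i B' B'

/-- Basic epistemic language L_EL. -/
inductive FormEL (n : ℕ) : Type
  | atom : ℕ → FormEL n
  | neg : FormEL n → FormEL n
  | conj : FormEL n → FormEL n → FormEL n
  | box : Fin n → FormEL n → FormEL n

/-- Satisfaction of L_EL at an MBM (B, C). -/
def satEL {n : ℕ} (C : Set (MBB n)) (B : MBB n) : FormEL n → Prop
  | .atom p => p ∈ B.state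
  | .neg a => ¬ satEL C B a
  | .conj a b => satEL C B a ∧ satEL C B b
  | .box i a => ∀ B' ∈ C, EpiAlt i B B' → satEL C B' a

/-! ### Auxiliary development -/

namespace Stmt6Aux

open Classical

noncomputable instance {n : ℕ} : DecidableEq (Form0 n) := Classical.decEq _
noncomputable instance {n : ℕ} : DecidableEq (FormEL n) := Classical.decEq _

variable {n : ℕ}

/-- atoms of an L_EL formula -/
def atomsEL : FormEL n → Finset ℕ
  | .atom p => {p}
  | .neg a => atomsEL a
  | .conj a b => atomsEL a ∪ atomsEL b
  | .box _ a => atomsEL a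

/-- Kripke satisfaction on an abstract frame. -/
def ksat {W : Type} (R : Fin n → W → W → Prop) (V : W → ℕ → Bool) : FormEL n → W → Prop
  | .atom q, w => V w q = true
  | .neg a, w => ¬ ksat R V a w
  | .conj a b, w => ksat R V a w ∧ ksat R V b w
  | .box i a, w => ∀ u, R i w u → ksat R V a u

lemma ksat_congr {W : Type} {R R' : Fin n → W → W → Prop} {V : W → ℕ → Bool}
    (h : ∀ i x y, R i x y ↔ R' i x y) :
    ∀ (ψ : FormEL n) (w : W), ksat R V ψ w ↔ ksat R' V ψ w := by
  intro ψ
  induction ψ with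
  | atom q => intro w; rfl
  | neg a ih => intro w; simp [ksat, ih]
  | conj a b iha ihb => intro w; simp [ksat, iha, ihb]
  | box i a ih =>
    intro w
    simp only [ksat]
    constructor
    · intro H u hu; exact (ih u).mp (H u ((h i w u).mpr hu))
    · intro H u hu; exact (ih u).mpr (H u ((h i w u).mp hu))

/-- subformulas (as a list) -/
def subf : FormEL n → List (FormEL n)
  | .atom q => [.atom q]
  | .neg a => .neg a :: subf a
  | .conj a b => .conj a b :: (subf a ++ subf b)
  | .box i a => .box i a :: subf a

lemma mem_subf_self (ψ : FormEL n) : ψ ∈ subf ψ := by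
  cases ψ <;> simp [subf]

lemma mem_subf_trans {φ ψ χ : FormEL n} (h1 : ψ ∈ subf φ) (h2 : χ ∈ subf ψ) : χ ∈ subf φ := by
  induction φ with
  | atom q => simp [subf] at h1; subst h1; exact h2
  | neg a ih =>
    simp [subf] at h1 ⊢
    rcases h1 with h1 | h1
    · subst h1; simpa [subf] using h2
    · exact Or.inr (by simpa [subf] using ih h1)
  | conj a b iha ihb =>
    simp [subf] at h1 ⊢
    rcases h1 with h1 | h1 | h1
    · subst h1; simpa [subf] using h2
    · exact Or.inr (Or.inl (iha h1))
    · exact Or.inr (Or.inr (ihb h1))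
  | box i a ih =>
    simp [subf] at h1 ⊢
    rcases h1 with h1 | h1
    · subst h1; simpa [subf] using h2
    · exact Or.inr (ih h1)


/-! ### Realization of a finite reflexive Kripke model in the universal context -/

section Realize

variable {W : Type} [Fintype W] [DecidableEq W]

/-- size of an L₀ formula -/
def sz : Form0 n → ℕ
  | .atom _ => 1
  | .neg a => sz a + 1
  | .conj a b => sz a + sz b + 1
  | .tri _ a => sz a + 1

lemma sz_neg (a : Form0 n) : sz (Form0.neg a) = sz a + 1 := rfl
lemma sz_conj (a b : Form0 n) : sz (Form0.conj a b) = sz a + sz b + 1 := rfl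
lemma sz_tri (j : Fin n) (a : Form0 n) : sz (Form0.tri j a) = sz a + 1 := rfl

lemma MBB.ext' {X Y : MBB n} (hb : ∀ j, X.base j = Y.base j) (hs : X.state = Y.state) :
    X = Y := by
  cases X; cases Y; simp only [MBB.mk.injEq]; exact ⟨funext hb, hs⟩

def top0 : Form0 n := .neg (.conj (.atom 0) (.neg (.atom 0)))

def andL : List (Form0 n) → Form0 n := fun l => l.foldr .conj top0

def orL (l : List (Form0 n)) : Form0 n := .neg (andL (l.map .neg))

lemma sat0_top0 (B : MBB n) : sat0 B (top0 (n := n)) := by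
  simp [top0, sat0]

lemma sat0_andL (B : MBB n) (l : List (Form0 n)) :
    sat0 B (andL l) ↔ ∀ a ∈ l, sat0 B a := by
  induction l with
  | nil => simpa [andL] using sat0_top0 B
  | cons a l ih => simp [andL, sat0] at ih ⊢; tauto

lemma sat0_orL (B : MBB n) (l : List (Form0 n)) :
    sat0 B (orL l) ↔ ∃ a ∈ l, sat0 B a := by
  simp [orL, sat0, sat0_andL]

lemma sz_andL (l : List (Form0 n)) {a : Form0 n} (h : a ∈ l) : sz a < sz (andL l) := by
  induction l with
  | nil => simp at h
  | cons b l ih =>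
    rcases List.mem_cons.mp h with rfl | h
    · simp [andL, sz]
    · have h2 := ih h; simp [andL, sz] at h2 ⊢; omega

lemma sz_orL (l : List (Form0 n)) {a : Form0 n} (h : a ∈ l) : sz a < sz (orL l) := by
  have : sz (Form0.neg a) < sz (andL (l.map .neg)) := sz_andL _ (List.mem_map_of_mem h)
  simp [orL, sz] at this ⊢; omega

variable (Rb : Fin n → W → W → Bool) (V : W → ℕ → Bool) (A : Finset ℕ)

noncomputable def mark (w : W) : ℕ := A.sup id + 1 + ((Fintype.equivFin W) w : ℕ)

lemma mark_not_mem (w : W) : mark A w ∉ A := by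
  intro h
  have h2 : mark A w ≤ A.sup id := Finset.le_sup (f := id) h
  unfold mark at h2; omega

lemma mark_inj : Function.Injective (mark (W := W) A) := by
  intro u v h
  simp [mark] at h
  exact (Fintype.equivFin W).injective (Fin.ext h)

noncomputable def univT : List W := Finset.univ.toList

lemma mem_univT (w : W) : w ∈ (univT : List W) := by simp [univT]

noncomputable def succL (j : Fin n) (w : W) : List W := univT.filter (fun u => Rb j w u)

lemma mem_succL {j : Fin n} {w u : W} : u ∈ succL Rb j w ↔ Rb j w u = true := by
  simp [succL, mem_univT]

noncomputable def litsList (w : W) : List (Form0 n) :=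
  (A.toList.map fun q => if V w q then Form0.atom q else .neg (.atom q)) ++
  ((univT : List W).map fun u => if u = w then Form0.atom (mark A u) else .neg (.atom (mark A u)))

noncomputable def lits (w : W) : Form0 n := andL (litsList V A w)

lemma sat0_lits (B : MBB n) (w : W) :
    sat0 B (lits V A w) ↔
      (∀ q ∈ A, (q ∈ B.state ↔ V w q = true)) ∧ (∀ u : W, (mark A u ∈ B.state ↔ u = w)) := by
  rw [lits, sat0_andL]
  constructor
  · intro h
    constructor
    · intro q hq
      have hm : (if V w q then Form0.atom q else .neg (.atom q)) ∈ litsList (n := n) V A w := by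
        apply List.mem_append.mpr; left
        exact List.mem_map_of_mem (by simpa using hq)
      have := h _ hm
      by_cases hv : V w q <;> simp [hv, sat0] at this ⊢ <;> tauto
    · intro u
      have hm : (if u = w then Form0.atom (mark A u) else .neg (.atom (mark A u))) ∈ litsList (n := n) V A w := by
        apply List.mem_append.mpr; right
        exact List.mem_map_of_mem (mem_univT u)
      have := h _ hm
      by_cases hu : u = w <;> simp [hu, sat0] at this ⊢ <;> tauto
  · rintro ⟨h1, h2⟩ a ha
    rcases List.mem_append.mp ha with ha | ha
    · rcases List.mem_map.mp ha with ⟨q, hq, rfl⟩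
      have hq' : q ∈ A := by simpa using hq
      by_cases hv : V w q <;> simp [hv, sat0]
      · exact (h1 q hq').mpr hv
      · intro hc; exact hv ((h1 q hq').mp hc)
    · rcases List.mem_map.mp ha with ⟨u, hu, rfl⟩
      by_cases h : u = w <;> simp [h, sat0]
      · subst h; exact (h2 u).mpr rfl
      · intro hc; exact h ((h2 u).mp hc)

noncomputable def dltOf (f : W → Form0 n) (w : W) (j : Fin n) : Form0 n := orL ((succL Rb j w).map f)

noncomputable def othersOf (f : W → Form0 n) (j : Fin n) (w : W) : List (Form0 n) :=
  ((univT : List W).map fun u => dltOf Rb f u j).filter (fun d => d ≠ dltOf Rb f w j)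

noncomputable def mkTheta (f : W → Form0 n) (w : W) : Form0 n :=
  .conj (lits V A w) (andL ((List.finRange n).flatMap fun j =>
     .tri j (dltOf Rb f w j) :: (othersOf Rb f j w).map fun d => .neg (.tri j d)))

noncomputable def theta : ℕ → W → Form0 n
  | 0 => lits V A
  | k+1 => mkTheta Rb V A (theta k)

noncomputable def dlt (k : ℕ) : W → Fin n → Form0 n := dltOf Rb (theta Rb V A k)

/-- The common, self-propagating constraint set C₀. -/
noncomputable def inC0 : Form0 n → Prop
  | .neg (.atom q) => q ∉ A ∧ ∀ w : W, q ≠ mark A w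
  | .neg (.tri j b) => (¬ ∃ k w, b = dlt Rb V A k w j) ∧ ¬ inC0 b
  | .tri _ c => inC0 c
  | .atom _ => False
  | .neg (.neg _) => False
  | .neg (.conj _ _) => False
  | .conj _ _ => False

/-- The realization of a world. -/
noncomputable def TT (w : W) : MBB n :=
  ⟨fun j => {a | ∃ k, a = dlt Rb V A k w j} ∪ {a | inC0 Rb V A a},
   {q | q ∈ A ∧ V w q = true} ∪ {mark A w}⟩

lemma mem_othersOf {f : W → Form0 n} {j : Fin n} {w : W} {d : Form0 n} :
    d ∈ othersOf Rb f j w ↔ (∃ u, d = dltOf Rb f u j) ∧ d ≠ dltOf Rb f w j := by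
  constructor
  · intro h
    rcases List.mem_filter.mp h with ⟨hm, hp⟩
    rcases List.mem_map.mp hm with ⟨u, _, rfl⟩
    exact ⟨⟨u, rfl⟩, by simpa using hp⟩
  · rintro ⟨⟨u, rfl⟩, hne⟩
    exact List.mem_filter.mpr ⟨List.mem_map_of_mem (mem_univT u), by simpa using hne⟩

lemma sat0_theta_succ (B : MBB n) (k : ℕ) (w : W) :
    sat0 B (theta Rb V A (k+1) w) ↔
      sat0 B (lits V A w) ∧ ∀ j : Fin n, (dlt Rb V A k w j ∈ B.base j ∧
        ∀ d ∈ othersOf Rb (theta Rb V A k) j w, d ∉ B.base j) := by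
  show sat0 B (mkTheta Rb V A (theta Rb V A k) w) ↔ _
  simp only [mkTheta, sat0, sat0_andL]
  constructor
  · rintro ⟨hl, h⟩
    refine ⟨hl, fun j => ⟨?_, ?_⟩⟩
    · have hm : Form0.tri j (dltOf Rb (theta Rb V A k) w j) ∈
          (List.finRange n).flatMap (fun j => Form0.tri j (dltOf Rb (theta Rb V A k) w j) ::
            (othersOf Rb (theta Rb V A k) j w).map fun d => Form0.neg (Form0.tri j d)) :=
        List.mem_flatMap.mpr ⟨j, List.mem_finRange j, List.mem_cons_self⟩
      exact h _ hm
    · intro d hd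
      have hm : Form0.neg (Form0.tri j d) ∈
          (List.finRange n).flatMap (fun j => Form0.tri j (dltOf Rb (theta Rb V A k) w j) ::
            (othersOf Rb (theta Rb V A k) j w).map fun d => Form0.neg (Form0.tri j d)) :=
        List.mem_flatMap.mpr ⟨j, List.mem_finRange j,
          List.mem_cons_of_mem _ (List.mem_map_of_mem hd)⟩
      exact h _ hm
  · rintro ⟨hl, h⟩
    refine ⟨hl, ?_⟩
    intro a ha
    rcases List.mem_flatMap.mp ha with ⟨j, -, hj⟩
    rcases List.mem_cons.mp hj with rfl | hj
    · exact (h j).1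
    · rcases List.mem_map.mp hj with ⟨d, hd, rfl⟩
      exact (h j).2 d hd

lemma lits_of_theta {B : MBB n} {k : ℕ} {v : W} (h : sat0 B (theta Rb V A k v)) :
    sat0 B (lits V A v) := by
  cases k with
  | zero => exact h
  | succ k => exact ((sat0_theta_succ Rb V A B k v).mp h).1

lemma sz_dlt_succ (hrefl : ∀ i w, Rb i w w = true) (k : ℕ) (u w : W) (j j' : Fin n) :
    sz (dlt Rb V A k u j) < sz (dlt Rb V A (k+1) w j') := by
  have hth : theta Rb V A (k+1) w ∈ (succL Rb j' w).map (theta Rb V A (k+1)) :=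
    List.mem_map_of_mem ((mem_succL Rb).mpr (hrefl j' w))
  have h1 : sz (theta Rb V A (k+1) w) < sz (dlt Rb V A (k+1) w j') := sz_orL _ hth
  have h2 : sz (dlt Rb V A k u j) + 1 < sz (theta Rb V A (k+1) w) := by
    show _ < sz (mkTheta Rb V A (theta Rb V A k) w)
    simp only [mkTheta, sz_conj]
    by_cases hd : dlt Rb V A k u j = dltOf Rb (theta Rb V A k) w j
    · have hmem : Form0.tri j (dltOf Rb (theta Rb V A k) w j) ∈
          (List.finRange n).flatMap (fun j => Form0.tri j (dltOf Rb (theta Rb V A k) w j) ::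
            (othersOf Rb (theta Rb V A k) j w).map fun d => Form0.neg (Form0.tri j d)) :=
        List.mem_flatMap.mpr ⟨j, List.mem_finRange j, List.mem_cons_self⟩
      have h3 := sz_andL _ hmem
      rw [sz_tri] at h3
      rw [hd]
      omega
    · have hdm : dlt Rb V A k u j ∈ othersOf Rb (theta Rb V A k) j w :=
        (mem_othersOf Rb).mpr ⟨⟨u, rfl⟩, hd⟩
      have hmem : Form0.neg (Form0.tri j (dlt Rb V A k u j)) ∈
          (List.finRange n).flatMap (fun j => Form0.tri j (dltOf Rb (theta Rb V A k) w j) ::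
            (othersOf Rb (theta Rb V A k) j w).map fun d => Form0.neg (Form0.tri j d)) :=
        List.mem_flatMap.mpr ⟨j, List.mem_finRange j,
          List.mem_cons_of_mem _ (List.mem_map_of_mem hdm)⟩
      have h3 := sz_andL _ hmem
      rw [sz_neg, sz_tri] at h3
      omega
  omega

lemma sz_dlt_lt (hrefl : ∀ i w, Rb i w w = true) {k m : ℕ} (h : k < m) (u w : W) (j j' : Fin n) :
    sz (dlt Rb V A k u j) < sz (dlt Rb V A m w j') := by
  obtain ⟨d, rfl⟩ : ∃ d, m = k + d + 1 := ⟨m - k - 1, by omega⟩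
  clear h
  induction d with
  | zero => exact sz_dlt_succ Rb V A hrefl k u w j j'
  | succ d ih =>
    have he : k + (d + 1) + 1 = (k + d + 1) + 1 := by omega
    rw [he]
    exact lt_trans ih (sz_dlt_succ Rb V A hrefl (k + d + 1) w w j' j')

lemma dlt_level_inj (hrefl : ∀ i w, Rb i w w = true) {k m : ℕ} {u w : W} {j j' : Fin n}
    (h : dlt Rb V A k u j = dlt Rb V A m w j') : k = m := by
  rcases lt_trichotomy k m with hl | hl | hl
  · have := sz_dlt_lt Rb V A hrefl hl u w j j'; rw [h] at this; omega
  · exact hl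
  · have := sz_dlt_lt Rb V A hrefl hl w u j' j; rw [h] at this; omega

lemma not_inC0_orL (l : List (Form0 n)) : ¬ inC0 Rb V A (orL l) := by
  cases l <;> simp [orL, andL, top0, inC0]

lemma not_inC0_dlt (k : ℕ) (w : W) (j : Fin n) : ¬ inC0 Rb V A (dlt Rb V A k w j) :=
  not_inC0_orL Rb V A _

lemma sat0_lits_TT (w : W) : sat0 (TT Rb V A w) (lits V A w) := by
  rw [sat0_lits]
  constructor
  · intro q hq
    constructor
    · rintro (⟨_, hv⟩ | hm)
      · exact hv
      · exact absurd (hm ▸ hq) (mark_not_mem A w)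
    · intro hv; exact Or.inl ⟨hq, hv⟩
  · intro u
    constructor
    · rintro (⟨hmem, _⟩ | hm)
      · exact absurd hmem (mark_not_mem A u)
      · exact mark_inj A hm
    · rintro rfl; exact Or.inr rfl

lemma sat_theta_self (hrefl : ∀ i w, Rb i w w = true) (k : ℕ) (w : W) :
    sat0 (TT Rb V A w) (theta Rb V A k w) := by
  cases k with
  | zero => exact sat0_lits_TT Rb V A w
  | succ k =>
    rw [sat0_theta_succ]
    refine ⟨sat0_lits_TT Rb V A w, fun j => ⟨Or.inl ⟨k, rfl⟩, ?_⟩⟩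
    intro d hd
    rcases (mem_othersOf Rb).mp hd with ⟨⟨x, rfl⟩, hne⟩
    rintro (⟨m, hm⟩ | hC)
    · have : k = m := dlt_level_inj Rb V A hrefl hm
      subst this
      exact hne hm
    · exact not_inC0_dlt Rb V A k x j hC

lemma inC0_neg_atom {q : ℕ} (h1 : q ∉ A) (h2 : ∀ w : W, q ≠ mark A w) :
    inC0 (n := n) Rb V A (.neg (.atom q)) := by simp [inC0]; exact ⟨h1, h2⟩

lemma sat_inC0 {a : Form0 n} (h : inC0 Rb V A a) (v : W) : sat0 (TT Rb V A v) a := by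
  match a with
  | .atom q => simp [inC0] at h
  | .conj a b => simp [inC0] at h
  | .tri j c =>
    simp only [inC0] at h
    exact Or.inr h
  | .neg (.atom q) =>
    simp only [inC0] at h
    show q ∉ (TT Rb V A v).state
    rintro (⟨hq, _⟩ | hq)
    · exact h.1 hq
    · exact h.2 v hq
  | .neg (.neg b) => simp [inC0] at h
  | .neg (.conj a b) => simp [inC0] at h
  | .neg (.tri j b) =>
    simp only [inC0] at h
    show ¬ (b ∈ (TT Rb V A v).base j)
    rintro (⟨k, hk⟩ | hC)
    · exact h.1 ⟨k, v, hk⟩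
    · exact h.2 hC

lemma TT_correct (hrefl : ∀ i w, Rb i w w = true) (w : W) : (TT Rb V A w).Correct := by
  intro j a ha
  rcases ha with ⟨k, rfl⟩ | hC
  · rw [dlt, dltOf, sat0_orL]
    exact ⟨theta Rb V A k w, List.mem_map_of_mem ((mem_succL Rb).mpr (hrefl j w)),
      sat_theta_self Rb V A hrefl k w⟩
  · exact sat_inC0 Rb V A hC w

lemma epiAlt_TT (hrefl : ∀ i w, Rb i w w = true) {w u : W} {j : Fin n}
    (h : Rb j w u = true) : EpiAlt j (TT Rb V A w) (TT Rb V A u) := by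
  intro a ha
  rcases ha with ⟨k, rfl⟩ | hC
  · rw [dlt, dltOf, sat0_orL]
    exact ⟨theta Rb V A k u, List.mem_map_of_mem ((mem_succL Rb).mpr h),
      sat_theta_self Rb V A hrefl k u⟩
  · exact sat_inC0 Rb V A hC u

lemma succ_char (hrefl : ∀ i w, Rb i w w = true) {w : W} {i : Fin n} {Z : MBB n}
    (hE : EpiAlt i (TT Rb V A w) Z) :
    ∃ u, Rb i w u = true ∧ Z = TT Rb V A u := by
  have hδ : ∀ k, sat0 Z (dlt Rb V A k w i) := fun k => hE _ (Or.inl ⟨k, rfl⟩)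
  have hC0 : ∀ a, inC0 Rb V A a → sat0 Z a := fun a ha => hE _ (Or.inr ha)
  have hwit : ∀ k, ∃ u, Rb i w u = true ∧ sat0 Z (theta Rb V A k u) := by
    intro k
    have := (sat0_orL Z _).mp (hδ k)
    rcases this with ⟨a, ha, hsa⟩
    rcases List.mem_map.mp ha with ⟨u, hu, rfl⟩
    exact ⟨u, (mem_succL Rb).mp hu, hsa⟩
  obtain ⟨u, hu, hθ0⟩ := hwit 0
  have hmark : ∀ x : W, (mark A x ∈ Z.state ↔ x = u) :=
    ((sat0_lits V A Z u).mp (lits_of_theta Rb V A hθ0)).2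
  have hθ : ∀ k, sat0 Z (theta Rb V A k u) := by
    intro k
    obtain ⟨x, hx, hθx⟩ := hwit k
    have hmx : ∀ y : W, (mark A y ∈ Z.state ↔ y = x) :=
      ((sat0_lits V A Z x).mp (lits_of_theta Rb V A hθx)).2
    have : x = u := (hmark x).mp ((hmx x).mpr rfl)
    subst this; exact hθx
  have hlits := (sat0_lits V A Z u).mp (lits_of_theta Rb V A (hθ 0))
  have hpos : ∀ k (j : Fin n), dlt Rb V A k u j ∈ Z.base j := by
    intro k j
    exact (((sat0_theta_succ Rb V A Z k u).mp (hθ (k+1))).2 j).1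
  have hnegs : ∀ k (j : Fin n), ∀ d ∈ othersOf Rb (theta Rb V A k) j u, d ∉ Z.base j := by
    intro k j
    exact (((sat0_theta_succ Rb V A Z k u).mp (hθ (k+1))).2 j).2
  refine ⟨u, hu, ?_⟩
  have hstate : Z.state = (TT Rb V A u).state := by
    ext q
    constructor
    · intro hq
      by_cases hqA : q ∈ A
      · exact Or.inl ⟨hqA, (hlits.1 q hqA).mp hq⟩
      · by_cases hqm : ∃ x : W, q = mark A x
        · obtain ⟨x, rfl⟩ := hqm
          have : x = u := (hmark x).mp hq
          subst this; exact Or.inr rfl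
        · push_neg at hqm
          have := hC0 _ (inC0_neg_atom Rb V A hqA hqm)
          exact absurd hq this
    · rintro (⟨hqA, hv⟩ | hq)
      · exact (hlits.1 _ hqA).mpr hv
      · rw [show q = mark A u from hq]
        exact (hmark u).mpr rfl
  have hbase : ∀ j : Fin n, Z.base j = (TT Rb V A u).base j := by
    intro j
    ext a
    constructor
    · intro ha
      by_cases hδa : ∃ (k : ℕ) (x : W), a = dlt Rb V A k x j
      · obtain ⟨k, x, rfl⟩ := hδa
        by_cases he : dlt Rb V A k x j = dlt Rb V A k u j
        · exact Or.inl ⟨k, he⟩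
        · have hmem : dlt Rb V A k x j ∈ othersOf Rb (theta Rb V A k) j u :=
            (mem_othersOf Rb).mpr ⟨⟨x, rfl⟩, he⟩
          exact absurd ha (hnegs k j _ hmem)
      · by_cases hC : inC0 Rb V A a
        · exact Or.inr hC
        · have hin : inC0 Rb V A (.neg (.tri j a)) := by
            simp only [inC0]; exact ⟨fun ⟨k, x, hx⟩ => hδa ⟨k, x, hx⟩, hC⟩
          have := hC0 _ hin
          exact absurd ha this
    · rintro (⟨k, rfl⟩ | hC)
      · exact hpos k j
      · have : inC0 Rb V A (.tri j a) := by simpa [inC0] using hC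
        exact hC0 _ this
  exact MBB.ext' hbase hstate

lemma realize_truth (hrefl : ∀ i w, Rb i w w = true) :
    ∀ ψ : FormEL n, atomsEL ψ ⊆ A → ∀ w : W,
      (satEL {B : MBB n | B.Correct} (TT Rb V A w) ψ ↔
        ksat (fun i x y => Rb i x y = true) V ψ w) := by
  intro ψ
  induction ψ with
  | atom q =>
    intro hA w
    have hq : q ∈ A := hA (by simp [atomsEL])
    show q ∈ (TT Rb V A w).state ↔ _
    constructor
    · rintro (⟨_, hv⟩ | hm)
      · exact hv
      · exact absurd (hm ▸ hq) (mark_not_mem A w)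
    · intro hv; exact Or.inl ⟨hq, hv⟩
  | neg a ih =>
    intro hA w
    have : atomsEL a ⊆ A := by simpa [atomsEL] using hA
    simp [satEL, ksat, ih this w]
  | conj a b iha ihb =>
    intro hA w
    have ha : atomsEL a ⊆ A := fun x hx => hA (by simp [atomsEL]; exact Or.inl hx)
    have hb : atomsEL b ⊆ A := fun x hx => hA (by simp [atomsEL]; exact Or.inr hx)
    simp [satEL, ksat, iha ha w, ihb hb w]
  | box i a ih =>
    intro hA w
    have ha : atomsEL a ⊆ A := by simpa [atomsEL] using hA
    constructor
    · intro H u hu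
      have := H (TT Rb V A u) (TT_correct Rb V A hrefl u) (epiAlt_TT Rb V A hrefl hu)
      exact (ih ha u).mp this
    · intro H Z hZ hE
      obtain ⟨u, hu, rfl⟩ := succ_char Rb V A hrefl hE
      exact (ih ha u).mpr (H u hu)

end Realize

/-! ### Filtration: from a belief-correct MBM to a finite reflexive Kripke model -/

section Filtration

variable (φ : FormEL n) (C : Set (MBB n))

noncomputable def subfS : Finset (FormEL n) := (subf φ).toFinset

noncomputable def typeofB (B' : MBB n) : ↥(subfS φ) → Bool :=
  fun s => @decide _ (Classical.propDecidable (satEL C B' s.1))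

def WT := {f : ↥(subfS φ) → Bool // ∃ B' ∈ C, typeofB φ C B' = f}

instance : Finite (WT φ C) := Subtype.finite

noncomputable instance : Fintype (WT φ C) := Fintype.ofFinite _

def RW : Fin n → WT φ C → WT φ C → Prop :=
  fun i t s => ∃ B₁ ∈ C, ∃ B₂ ∈ C, typeofB φ C B₁ = t.1 ∧ typeofB φ C B₂ = s.1 ∧ EpiAlt i B₁ B₂

noncomputable def VW : WT φ C → ℕ → Bool :=
  fun t q => if h : (FormEL.atom q) ∈ subfS φ then t.1 ⟨_, h⟩ else false

noncomputable def wOf (B' : MBB n) (h : B' ∈ C) : WT φ C := ⟨typeofB φ C B', B', h, rfl⟩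

lemma RW_refl (hC : ∀ B' ∈ C, ∀ i : Fin n, EpiAlt i B' B') (i : Fin n) (t : WT φ C) :
    RW φ C i t t := by
  obtain ⟨B', hB', ht⟩ := t.2
  exact ⟨B', hB', B', hB', ht, ht, hC B' hB' i⟩

lemma typeofB_iff {B₁ B₂ : MBB n} (h : typeofB φ C B₁ = typeofB φ C B₂)
    {ψ : FormEL n} (hψ : ψ ∈ subfS φ) : (satEL C B₁ ψ ↔ satEL C B₂ ψ) := by
  have := congrFun h ⟨ψ, hψ⟩
  simp only [typeofB] at this
  constructor
  · intro hs
    have h1 : @decide _ (Classical.propDecidable (satEL C B₁ ψ)) = true :=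
      decide_eq_true hs
    rw [this] at h1
    exact of_decide_eq_true h1
  · intro hs
    have h1 : @decide _ (Classical.propDecidable (satEL C B₂ ψ)) = true :=
      decide_eq_true hs
    rw [← this] at h1
    exact of_decide_eq_true h1

lemma mem_subfS_of_neg {a : FormEL n} (h : (FormEL.neg a) ∈ subfS φ) : a ∈ subfS φ := by
  rw [subfS, List.mem_toFinset] at h ⊢
  exact mem_subf_trans h (List.mem_cons_of_mem _ (mem_subf_self a))

lemma mem_subfS_of_conj {a b : FormEL n} (h : (FormEL.conj a b) ∈ subfS φ) :
    a ∈ subfS φ ∧ b ∈ subfS φ := by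
  have h' : (FormEL.conj a b) ∈ subf φ := by
    rw [subfS, List.mem_toFinset] at h; exact h
  constructor
  · rw [subfS, List.mem_toFinset]
    exact mem_subf_trans h' (List.mem_cons_of_mem _
      (List.mem_append.mpr (Or.inl (mem_subf_self a))))
  · rw [subfS, List.mem_toFinset]
    exact mem_subf_trans h' (List.mem_cons_of_mem _
      (List.mem_append.mpr (Or.inr (mem_subf_self b))))

lemma mem_subfS_of_box {i : Fin n} {a : FormEL n} (h : (FormEL.box i a) ∈ subfS φ) :
    a ∈ subfS φ := by
  rw [subfS, List.mem_toFinset] at h ⊢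
  exact mem_subf_trans h (List.mem_cons_of_mem _ (mem_subf_self a))

lemma filt_truth (hC : ∀ B' ∈ C, ∀ i : Fin n, EpiAlt i B' B') :
    ∀ ψ : FormEL n, ψ ∈ subfS φ → ∀ (B' : MBB n) (h : B' ∈ C),
      (ksat (RW φ C) (VW φ C) ψ (wOf φ C B' h) ↔ satEL C B' ψ) := by
  intro ψ
  induction ψ with
  | atom q =>
    intro hψ B' h
    show VW φ C (wOf φ C B' h) q = true ↔ _
    rw [VW]
    rw [dif_pos hψ]
    show typeofB φ C B' ⟨_, hψ⟩ = true ↔ _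
    rw [typeofB]
    constructor
    · exact of_decide_eq_true
    · exact decide_eq_true
  | neg a ih =>
    intro hψ B' h
    have ha := mem_subfS_of_neg φ hψ
    show ¬ _ ↔ ¬ _
    rw [ih ha B' h]
  | conj a b iha ihb =>
    intro hψ B' h
    obtain ⟨ha, hb⟩ := mem_subfS_of_conj φ hψ
    show _ ∧ _ ↔ _ ∧ _
    rw [iha ha B' h, ihb hb B' h]
  | box i a ih =>
    intro hψ B' h
    have ha := mem_subfS_of_box φ hψ
    constructor
    · intro H B'' hB'' hE
      have hr : RW φ C i (wOf φ C B' h) (wOf φ C B'' hB'') :=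
        ⟨B', h, B'', hB'', rfl, rfl, hE⟩
      exact (ih ha B'' hB'').mp (H _ hr)
    · intro H s hs
      obtain ⟨B₁, h1, B₂, h2, ht1, ht2, hE⟩ := hs
      have hs2 : s = wOf φ C B₂ h2 := Subtype.ext ht2.symm
      have hbox : satEL C B₁ (FormEL.box i a) :=
        (typeofB_iff φ C (ht1 : typeofB φ C B₁ = typeofB φ C B') hψ).mpr H
      have := hbox B₂ h2 hE
      rw [hs2]
      exact (ih ha B₂ h2).mpr this

end Filtration

end Stmt6Aux

theorem stmt6 (n : ℕ) (φ : FormEL n) :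
    (∀ (B : MBB n) (C : Set (MBB n)), BC B C → satEL C B φ) ↔
      (∀ B : MBB n, B.Correct → satEL {B' : MBB n | B'.Correct} B φ) := by
  classical
  constructor
  · intro h B hB
    exact h B {B' | B'.Correct} ⟨hB, fun B' hB' i a ha => hB' i a ha⟩
  · intro h B C hBC
    by_contra hn
    open Stmt6Aux in
    · have hφmem : φ ∈ subfS φ := List.mem_toFinset.mpr (mem_subf_self φ)
      have hk : ¬ ksat (RW φ C) (VW φ C) φ (wOf φ C B hBC.1) := fun hk' =>
        hn ((filt_truth φ C hBC.2 φ hφmem B hBC.1).mp hk')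
      haveI : DecidableEq (WT φ C) := Classical.decEq _
      let Rb : Fin n → WT φ C → WT φ C → Bool := fun i x y =>
        @decide (RW φ C i x y) (Classical.propDecidable _)
      have hRb : ∀ (i : Fin n) (x y : WT φ C), RW φ C i x y ↔ (Rb i x y = true) :=
        fun i x y => ⟨fun hx => decide_eq_true hx, fun hx => of_decide_eq_true hx⟩
      have hrefl : ∀ (i : Fin n) (w : WT φ C), Rb i w w = true :=
        fun i w => (hRb i w w).mp (RW_refl φ C hBC.2 i w)
      have hr := realize_truth Rb (VW φ C) (atomsEL φ) hrefl φ (subset_refl _)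
        (wOf φ C B hBC.1)
      have hsat : satEL {B' : MBB n | B'.Correct}
          (TT Rb (VW φ C) (atomsEL φ) (wOf φ C B hBC.1)) φ :=
        h _ (TT_correct Rb (VW φ C) (atomsEL φ) hrefl _)
      have hks := hr.mp hsat
      exact hk ((ksat_congr hRb φ (wOf φ C B hBC.1)).mpr hks)
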